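/- Let ℓ ≥ 1 and let N be an odd natural number dividing ℓ. In the group G₃,ℓ = (ZMod 3) ⋊ (ZMod 2ℓ) (with j ∈ ZMod 2ℓ acting on ZMod 3 by multiplication by (−1)^j), the intersection of the center Z(G₃,ℓ) = ⟨(0,2)⟩ with the subgroup generated by (1,0) and (0,N) equals the cyclic subgroup generated by (0, 2N), and this subgroup has order ℓ/N. -/

import Mathlib

open SemidirectProduct Multiplicative

/-- The sign character `ZMod 2 → (ZMod 3)ˣ`, sending the class of `j` to `(-1)^j`. -/
def g3SignHom : Multiplicative (ZMod 2) →* (ZMod 3)ˣ where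
  toFun x := if x.toAdd = 0 then 1 else -1
  map_one' := by decide
  map_mul' := by decide

/-- Additive automorphisms of an additive group, viewed as multiplicative automorphisms
of the corresponding multiplicative group. -/
def addAutToMulAut (A : Type*) [AddCommGroup A] :
    Multiplicative (AddAut A) →* MulAut (Multiplicative A) where
  toFun f := AddEquiv.toMultiplicative f.toAdd
  map_one' := rfl
  map_mul' _ _ := rfl

/-- The action of `ZMod (2ℓ)` on `ZMod 3` where `j` acts by multiplication by `(-1)^j`. -/
def g3Action (ℓ : ℕ) :
    Multiplicative (ZMod (2 * ℓ)) →* MulAut (Multiplicative (ZMod 3)) :=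
  (addAutToMulAut (ZMod 3)).comp <| (AddAut.mulLeft (R := ZMod 3)).comp <|
    g3SignHom.comp <| AddMonoidHom.toMultiplicative
      (ZMod.castHom (dvd_mul_right 2 ℓ) (ZMod 2)).toAddMonoidHom

/-- The group `G₃,ℓ = ⟨s, t ∣ s³ = t^{2ℓ} = 1, ts = s²t⟩`, realized as the semidirect
product `(ZMod 3) ⋊ (ZMod 2ℓ)` in which `j` acts on `ZMod 3` by multiplication by
`(-1)^j`; here `s = (1,0) = inl 1` and `t = (0,1) = inr 1`. -/
abbrev G3 (ℓ : ℕ) : Type :=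
  Multiplicative (ZMod 3) ⋊[g3Action ℓ] Multiplicative (ZMod (2 * ℓ))

lemma g3Action_apply (ℓ : ℕ) (j : ZMod (2 * ℓ)) (x : Multiplicative (ZMod 3)) :
    g3Action ℓ (ofAdd j) x =
      ofAdd ((((if (ZMod.castHom (dvd_mul_right 2 ℓ) (ZMod 2)) j = 0 then 1 else -1 :
        (ZMod 3)ˣ) : (ZMod 3)ˣ) : ZMod 3) * x.toAdd) := rfl

lemma g3Action_eq_of_cast_zero (ℓ : ℕ) (j : ZMod (2 * ℓ)) (x : Multiplicative (ZMod 3))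
    (h : (ZMod.castHom (dvd_mul_right 2 ℓ) (ZMod 2)) j = 0) :
    g3Action ℓ (ofAdd j) x = x := by
  rw [g3Action_apply, if_pos h]; simp

lemma g3Action_eq_of_cast_ne_zero (ℓ : ℕ) (j : ZMod (2 * ℓ)) (x : Multiplicative (ZMod 3))
    (h : (ZMod.castHom (dvd_mul_right 2 ℓ) (ZMod 2)) j ≠ 0) :
    g3Action ℓ (ofAdd j) x = ofAdd (-(x.toAdd)) := by
  rw [g3Action_apply, if_neg h]
  norm_num

/-- For `N` odd dividing `ℓ`, the intersection of the center of `G₃,ℓ` with the subgroup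
generated by `s = (1,0)` and `t^N = (0,N)` equals the cyclic subgroup generated by
`(0, 2N)`, which has order `ℓ/N`. -/
theorem center_inter_support_G3 (ℓ N : ℕ) (hℓ : 1 ≤ ℓ) (hN : Odd N) (hdvd : N ∣ ℓ) :
    Subgroup.center (G3 ℓ) ⊓
        Subgroup.closure {(inl (ofAdd (1 : ZMod 3)) : G3 ℓ),
          inr (ofAdd ((N : ZMod (2 * ℓ))))}
      = Subgroup.zpowers (inr (ofAdd (((2 * N : ℕ) : ZMod (2 * ℓ)))) : G3 ℓ) ∧
    Nat.card
        (Subgroup.zpowers (inr (ofAdd (((2 * N : ℕ) : ZMod (2 * ℓ)))) : G3 ℓ))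
      = ℓ / N := by
  haveI : NeZero (2 * ℓ) := ⟨by omega⟩
  have hN0 : N ≠ 0 := by rintro rfl; simp at hN
  haveI : NeZero N := ⟨hN0⟩
  have hNdvd : N ∣ 2 * ℓ := hdvd.mul_left 2
  have h2Ndvd : 2 * N ∣ 2 * ℓ := mul_dvd_mul_left 2 hdvd
  -- the cast of 2*N to ZMod 2 is zero
  have hcast2N : (ZMod.castHom (dvd_mul_right 2 ℓ) (ZMod 2))
      (((2 * N : ℕ) : ZMod (2 * ℓ))) = 0 := by
    rw [map_natCast]
    exact (ZMod.natCast_eq_zero_iff _ _).mpr (dvd_mul_right 2 N)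
  constructor
  · apply le_antisymm
    · rintro g ⟨hc, hcl⟩
      -- step 1 : g.left = 1
      have hc' := Subgroup.mem_center_iff.mp hc
      have h1 : g.left = 1 := by
        have h := congrArg SemidirectProduct.left
          (hc' (inr (ofAdd (1 : ZMod (2 * ℓ)))))
        simp only [mul_left, left_inr, right_inr, map_one, mul_one, one_mul] at h
        rw [g3Action_eq_of_cast_ne_zero] at h
        · have : -(g.left.toAdd) = g.left.toAdd := congrArg Multiplicative.toAdd h
          have h3 : ∀ a : ZMod 3, -a = a → a = 0 := by decide
          have := h3 _ this
          exact (congrArg ofAdd this : _)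
        · rw [map_one]; exact one_ne_zero
      -- step 2 : g.right casts to 0 in ZMod 2
      have h2 : (ZMod.castHom (dvd_mul_right 2 ℓ) (ZMod 2)) g.right.toAdd = 0 := by
        by_contra hne
        have h := congrArg SemidirectProduct.left
          (hc' (inl (ofAdd (1 : ZMod 3))))
        simp only [mul_left, left_inl, right_inl, map_one, MulAut.one_apply, h1,
          mul_one, one_mul] at h
        rw [show g.right = ofAdd g.right.toAdd from rfl,
          g3Action_eq_of_cast_ne_zero _ _ _ hne] at h
        have h4 : (1 : ZMod 3) = -(1 : ZMod 3) := by
          have := congrArg Multiplicative.toAdd h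
          simpa using this
        exact absurd h4 (by decide)
      -- step 3 : g.right is a multiple of N
      have h3 : g.right ∈ Subgroup.zpowers (ofAdd ((N : ZMod (2 * ℓ)))) := by
        have hm : rightHom g ∈ Subgroup.map (rightHom : G3 ℓ →* _)
            (Subgroup.closure {(inl (ofAdd (1 : ZMod 3)) : G3 ℓ),
              inr (ofAdd ((N : ZMod (2 * ℓ))))}) :=
          Subgroup.mem_map_of_mem _ hcl
        rw [MonoidHom.map_closure] at hm
        have himg : (rightHom : G3 ℓ → _) ''
            {(inl (ofAdd (1 : ZMod 3)) : G3 ℓ), inr (ofAdd ((N : ZMod (2 * ℓ))))}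
            = {1, ofAdd ((N : ZMod (2 * ℓ)))} := by
          simp [Set.image_insert_eq]
        rw [himg] at hm
        have hle : Subgroup.closure {(1 : Multiplicative (ZMod (2 * ℓ))),
            ofAdd ((N : ZMod (2 * ℓ)))} ≤ Subgroup.zpowers (ofAdd ((N : ZMod (2 * ℓ)))) := by
          rw [Subgroup.closure_le]
          rintro x (rfl | rfl)
          · exact Subgroup.one_mem _
          · exact Subgroup.mem_zpowers _
        exact hle hm
      obtain ⟨k, hk⟩ := Subgroup.mem_zpowers_iff.mp h3
      set j : ZMod (2 * ℓ) := g.right.toAdd with hj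
      have hkj : k • ((N : ZMod (2 * ℓ))) = j := by
        have := congrArg Multiplicative.toAdd hk
        simpa using this
      -- 2 ∣ j.val
      have hd2 : 2 ∣ j.val := by
        rw [ZMod.castHom_apply, ← ZMod.natCast_val] at h2
        exact (ZMod.natCast_eq_zero_iff _ _).mp h2
      -- N ∣ j.val
      have hdN : N ∣ j.val := by
        have : (ZMod.castHom hNdvd (ZMod N)) j = 0 := by
          rw [← hkj, map_zsmul, map_natCast, ZMod.natCast_self, smul_zero]
        rw [ZMod.castHom_apply, ← ZMod.natCast_val] at this
        exact (ZMod.natCast_eq_zero_iff _ _).mp this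
      have hd2N : 2 * N ∣ j.val :=
        Nat.Coprime.mul_dvd_of_dvd_of_dvd (Nat.coprime_two_left.mpr hN) hd2 hdN
      obtain ⟨m, hm⟩ := hd2N
      -- g = (inr (2N))^m
      have hgr : j = m • (((2 * N : ℕ) : ZMod (2 * ℓ))) := by
        have : j = ((j.val : ℕ) : ZMod (2 * ℓ)) := by
          rw [ZMod.natCast_val, ZMod.cast_id]
        rw [this, hm, nsmul_eq_mul]
        push_cast
        ring
      have hgeq : g = (inr (ofAdd (((2 * N : ℕ) : ZMod (2 * ℓ)))) : G3 ℓ) ^ m := by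
        rw [← map_pow, ← ofAdd_nsmul, ← hgr]
        exact SemidirectProduct.ext h1 rfl
      rw [Subgroup.mem_zpowers_iff]
      exact ⟨m, by rw [zpow_natCast]; exact hgeq.symm⟩
    · rw [Subgroup.zpowers_le]
      refine ⟨Subgroup.mem_center_iff.mpr fun g => ?_, ?_⟩
      · refine SemidirectProduct.ext ?_ (mul_comm _ _)
        simp only [mul_left, left_inr, right_inr, map_one, mul_one, one_mul]
        exact (g3Action_eq_of_cast_zero _ _ _ hcast2N).symm
      · have h2N : (((2 * N : ℕ) : ZMod (2 * ℓ)))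
            = (N : ZMod (2 * ℓ)) + (N : ZMod (2 * ℓ)) := by push_cast; ring
        have hmem : (inr (ofAdd ((N : ZMod (2 * ℓ)))) : G3 ℓ) ∈
            Subgroup.closure {(inl (ofAdd (1 : ZMod 3)) : G3 ℓ),
              inr (ofAdd ((N : ZMod (2 * ℓ))))} :=
          Subgroup.subset_closure (Set.mem_insert_of_mem _ rfl)
        rw [h2N, ofAdd_add, map_mul]
        exact mul_mem hmem hmem
  · rw [Nat.card_zpowers, orderOf_injective (inr : _ →* G3 ℓ) inr_injective,
      orderOf_ofAdd_eq_addOrderOf, ZMod.addOrderOf_coe _ (NeZero.ne _),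
      Nat.gcd_eq_right h2Ndvd, Nat.mul_div_mul_left _ _ (by norm_num)]
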